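/- Let S_λ, S_μ be Young subgroups of S_n and S_{1,n-1} the Young subgroup generated by {τ_i : 1 < i < n}. Then the assignment (σ, α) ↦ σα defines a bijection from the set of pairs with α a distinguished S_{1,n-1}-S_λ double coset representative and σ a distinguished S_{μ¹}-S_{1,n-1}-double-coset representative in S_{1,n-1} relative to S_{ν(α)} = S_{1,n-1} ∩ αS_λα^{-1} with trivial intersection S_{μ¹} ∩ σS_{ν(α)}σ^{-1} = e, onto the set of distinguished S_{μ¹}-S_λ double coset representatives π in S_n with S_{μ¹} ∩ πS_λπ^{-1} = e, where S_{μ¹} = S_{1,n-1} ∩ S_μ. -/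

import Mathlib

noncomputable section

variable (N : ℕ)

/-- The basic transposition `τ_i = (i, i+1)` in `S_{N+1}`. -/
def tau (i : Fin N) : Equiv.Perm (Fin (N + 1)) := Equiv.swap i.castSucc i.succ

/-- The Coxeter length of a permutation. -/
def len (σ : Equiv.Perm (Fin (N + 1))) : ℕ :=
  sInf {m | ∃ l : List (Fin N), l.length = m ∧ (l.map (tau N)).prod = σ}

/-- The Young subgroup generated by the basic transpositions indexed by `B`. -/
def youngSubgroup (B : Set (Fin N)) : Subgroup (Equiv.Perm (Fin (N + 1))) :=
  Subgroup.closure (tau N '' B)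

/-- `π` is a distinguished (minimal length) representative of the double coset
`H π K`. -/
def IsMinDouble (H K : Subgroup (Equiv.Perm (Fin (N + 1))))
    (π : Equiv.Perm (Fin (N + 1))) : Prop :=
  ∀ a ∈ H, ∀ b ∈ K, len N π ≤ len N (a * π * b)

/-- The conjugate subgroup `π K π⁻¹`. -/
def conjSub (π : Equiv.Perm (Fin (N + 1))) (K : Subgroup (Equiv.Perm (Fin (N + 1)))) :
    Subgroup (Equiv.Perm (Fin (N + 1))) :=
  Subgroup.map (MulAut.conj π).toMonoidHom K

/-- The Young subgroup `S_{1,n-1}` generated by all basic transpositions except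
the first one. -/
def S1 : Subgroup (Equiv.Perm (Fin (N + 1))) :=
  youngSubgroup N {i : Fin N | (i : ℕ) ≠ 0}

theorem Equiv.Perm.apply_inv_self {α : Type*} (f : Equiv.Perm α) (x : α) : f (f⁻¹ x) = x :=
  f.apply_symm_apply x

theorem Equiv.Perm.inv_apply_self {α : Type*} (f : Equiv.Perm α) (x : α) : f⁻¹ (f x) = x :=
  f.symm_apply_apply x

namespace Mk

variable {N : ℕ}

def Inv (σ : Equiv.Perm (Fin (N + 1))) : Finset (Fin (N + 1) × Fin (N + 1)) :=
  Finset.univ.filter fun p => p.1 < p.2 ∧ σ p.2 < σ p.1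

def inv (σ : Equiv.Perm (Fin (N + 1))) : ℕ := (Inv σ).card

lemma mem_Inv {σ : Equiv.Perm (Fin (N + 1))} {p : Fin (N + 1) × Fin (N + 1)} :
    p ∈ Inv σ ↔ p.1 < p.2 ∧ σ p.2 < σ p.1 := by
  simp [Inv]

lemma tau_apply (k : Fin N) (x : Fin (N + 1)) :
    tau N k x = if x = k.castSucc then k.succ else if x = k.succ then k.castSucc else x := by
  simp [tau, Equiv.swap_apply_def]

lemma tau_tau (k : Fin N) (x : Fin (N + 1)) : tau N k (tau N k x) = x := by
  simp [tau, Equiv.swap_apply_self]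

lemma tau_lt_of_lt {k : Fin N} {i j : Fin (N + 1)}
    (hij : i < j) (hne : ¬(i = k.castSucc ∧ j = k.succ)) : tau N k i < tau N k j := by
  rw [tau_apply, tau_apply]
  have h1 : ((k.castSucc : Fin (N + 1)) : ℕ) = (k : ℕ) := rfl
  have h2 : ((k.succ : Fin (N + 1)) : ℕ) = (k : ℕ) + 1 := rfl
  split_ifs with a b c d e <;>
    simp only [Fin.lt_def, Fin.ext_iff, h1, h2] at * <;> omega

lemma inv_one : inv (1 : Equiv.Perm (Fin (N + 1))) = 0 := by
  simp only [inv, Inv, Finset.card_eq_zero, Finset.filter_eq_empty_iff]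
  rintro p -
  simp only [Equiv.Perm.one_apply]
  omega

/-- Core lemma: right multiplication by `tau k` at an ascent adds one inversion. -/
lemma inv_mul_tau {σ : Equiv.Perm (Fin (N + 1))} {k : Fin N}
    (h : σ k.castSucc < σ k.succ) : inv (σ * tau N k) = inv σ + 1 := by
  classical
  have hsk : tau N k k.castSucc = k.succ := Equiv.swap_apply_left _ _
  have hsk' : tau N k k.succ = k.castSucc := Equiv.swap_apply_right _ _
  have hcs : (k.castSucc : Fin (N+1)) < k.succ := Fin.castSucc_lt_succ
  have hpair : (k.castSucc, k.succ) ∈ Inv (σ * tau N k) := by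
    rw [mem_Inv]
    exact ⟨hcs, by simpa [Equiv.Perm.mul_apply, hsk, hsk'] using h⟩
  have hpairno : (k.castSucc, k.succ) ∉ Inv σ := by
    rw [mem_Inv]; push_neg; intro _; exact le_of_lt h
  have key : ((Inv (σ * tau N k)).erase (k.castSucc, k.succ)).card = (Inv σ).card := by
    apply Finset.card_nbij' (fun p => (tau N k p.1, tau N k p.2))
      (fun p => (tau N k p.1, tau N k p.2))
    · rintro ⟨i, j⟩ hp
      rw [Finset.mem_coe, Finset.mem_erase] at hp
      obtain ⟨hne, hp⟩ := hp
      rw [mem_Inv] at hp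
      obtain ⟨hij, hinv⟩ := hp
      simp only [Equiv.Perm.mul_apply] at hinv
      rw [Finset.mem_coe, mem_Inv]
      refine ⟨tau_lt_of_lt hij ?_, hinv⟩
      rintro ⟨rfl, rfl⟩
      exact hne rfl
    · rintro ⟨i, j⟩ hp
      rw [Finset.mem_coe, mem_Inv] at hp
      obtain ⟨hij, hinv⟩ := hp
      rw [Finset.mem_coe, Finset.mem_erase, mem_Inv]
      have hne2 : ¬(i = k.castSucc ∧ j = k.succ) := by
        rintro ⟨rfl, rfl⟩
        exact absurd hinv (not_lt.mpr (le_of_lt h))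
      refine ⟨?_, tau_lt_of_lt hij hne2, ?_⟩
      · rintro hc
        rw [Prod.ext_iff] at hc
        obtain ⟨hc1, hc2⟩ := hc
        simp only at hc1 hc2
        have hi : i = k.succ := (Equiv.injective (tau N k)) (by rw [hc1, hsk'])
        have hj : j = k.castSucc := (Equiv.injective (tau N k)) (by rw [hc2, hsk])
        rw [hi, hj] at hij
        exact absurd hij (not_lt.mpr (le_of_lt hcs))
      · simpa only [Equiv.Perm.mul_apply, tau_tau] using hinv
    · rintro ⟨i, j⟩ _; simp [tau_tau]
    · rintro ⟨i, j⟩ _; simp [tau_tau]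
  have hcard : (Inv (σ * tau N k)).card = ((Inv (σ * tau N k)).erase (k.castSucc, k.succ)).card + 1 := by
    rw [Finset.card_erase_of_mem hpair]
    have : 0 < (Inv (σ * tau N k)).card := Finset.card_pos.mpr ⟨_, hpair⟩
    omega
  rw [inv, inv, hcard, key]

lemma inv_inv_eq (σ : Equiv.Perm (Fin (N + 1))) : inv σ⁻¹ = inv σ := by
  apply Finset.card_nbij' (fun p => (σ⁻¹ p.2, σ⁻¹ p.1)) (fun p => (σ p.2, σ p.1))
  · rintro ⟨i, j⟩ hp
    rw [Finset.mem_coe, mem_Inv] at hp ⊢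
    simpa using ⟨hp.2, hp.1⟩
  · rintro ⟨i, j⟩ hp
    rw [Finset.mem_coe, mem_Inv] at hp ⊢
    simpa using ⟨hp.2, hp.1⟩
  · rintro ⟨i, j⟩ _; simp
  · rintro ⟨i, j⟩ _; simp

lemma strictMono_eq_one {σ : Equiv.Perm (Fin (N + 1))} (h : StrictMono σ) : σ = 1 := by
  have h2 : StrictMono (σ⁻¹ : Equiv.Perm (Fin (N + 1))) := by
    intro a b hab
    rcases lt_trichotomy (σ⁻¹ a) (σ⁻¹ b) with h1 | h1 | h1
    · exact h1
    · exact absurd (σ⁻¹.injective h1) (ne_of_lt hab)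
    · have := h h1
      simp only [Equiv.Perm.apply_inv_self] at this
      exact absurd hab (not_lt.mpr (le_of_lt this))
  ext x
  haveI : WellFoundedLT (Fin (N + 1)) := ⟨Finite.wellFounded_of_trans_of_irrefl _⟩
  have ha : x ≤ σ x := h.le_apply
  have hb : σ x ≤ σ⁻¹ (σ x) := h2.le_apply
  simp only [Equiv.Perm.inv_apply_self] at hb
  simp only [Equiv.Perm.one_apply]
  exact le_antisymm hb ha

/-- descent existence -/
lemma exists_descent {σ : Equiv.Perm (Fin (N + 1))} (h : σ ≠ 1) :
    ∃ k : Fin N, σ k.succ < σ k.castSucc := by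
  by_contra hc
  push_neg at hc
  apply h
  apply strictMono_eq_one
  rw [Fin.strictMono_iff_lt_succ]
  intro k
  rcases lt_or_eq_of_le (hc k) with h1 | h1
  · exact h1
  · exact absurd (σ.injective h1) (by simp [Fin.ext_iff])

lemma inv_mul_tau_of_descent {σ : Equiv.Perm (Fin (N + 1))} {k : Fin N}
    (h : σ k.succ < σ k.castSucc) : inv (σ * tau N k) + 1 = inv σ := by
  have h2 : (σ * tau N k) k.castSucc < (σ * tau N k) k.succ := by
    simpa [Equiv.Perm.mul_apply, tau_apply, Fin.ext_iff] using h
  have := inv_mul_tau h2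
  have h3 : σ * tau N k * tau N k = σ := by
    ext x; simp [Equiv.Perm.mul_apply, tau_tau]
  have h4 : tau N k * tau N k = 1 := by
    rw [tau]; exact Equiv.swap_mul_self _ _
  rw [mul_assoc, h4, mul_one] at this
  omega

lemma inv_eq_zero_iff {σ : Equiv.Perm (Fin (N + 1))} : inv σ = 0 ↔ σ = 1 := by
  constructor
  · intro h
    by_contra hc
    obtain ⟨k, hk⟩ := exists_descent hc
    have := inv_mul_tau_of_descent hk
    omega
  · rintro rfl; exact inv_one

/-- every permutation has a word of length `inv` -/
lemma exists_word (σ : Equiv.Perm (Fin (N + 1))) :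
    ∃ l : List (Fin N), l.length = inv σ ∧ (l.map (tau N)).prod = σ := by
  generalize hn : inv σ = n
  induction n generalizing σ with
  | zero => exact ⟨[], rfl, by rw [inv_eq_zero_iff] at hn; simp [hn]⟩
  | succ n ih =>
    have hne : σ ≠ 1 := by
      rintro rfl; rw [inv_one] at hn; omega
    obtain ⟨k, hk⟩ := exists_descent hne
    have h1 := inv_mul_tau_of_descent hk
    obtain ⟨l, hl, hlp⟩ := ih (σ * tau N k) (by omega)
    refine ⟨l ++ [k], by simp [hl], ?_⟩
    rw [List.map_append, List.prod_append, hlp]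
    simp only [List.map_cons, List.map_nil, List.prod_cons, List.prod_nil, mul_one, tau]
    rw [mul_assoc, Equiv.swap_mul_self, mul_one]

lemma inv_word_le (l : List (Fin N)) : inv ((l.map (tau N)).prod : Equiv.Perm (Fin (N + 1))) ≤ l.length := by
  induction l using List.reverseRecOn with
  | nil => simp [inv_one]
  | append_singleton l k ih =>
    rw [List.map_append, List.prod_append]
    simp only [List.map_cons, List.map_nil, List.prod_cons, List.prod_nil, mul_one]
    rcases lt_trichotomy ((l.map (tau N)).prod k.castSucc) ((l.map (tau N)).prod k.succ) with h | h | h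
    · have := inv_mul_tau h
      simp only [List.length_append, List.length_cons, List.length_nil]
      omega
    · exact absurd ((l.map (tau N)).prod.injective h) (by simp [Fin.ext_iff])
    · have := inv_mul_tau_of_descent h
      simp only [List.length_append, List.length_cons, List.length_nil]
      omega

lemma len_eq_inv (σ : Equiv.Perm (Fin (N + 1))) : len N σ = inv σ := by
  apply le_antisymm
  · obtain ⟨l, hl, hlp⟩ := exists_word σ
    exact Nat.sInf_le ⟨l, hl, hlp⟩
  · have hne : {m | ∃ l : List (Fin N), l.length = m ∧ (l.map (tau N)).prod = σ}.Nonempty := by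
      obtain ⟨l, hl, hlp⟩ := exists_word σ
      exact ⟨inv σ, l, hl, hlp⟩
    obtain ⟨l, hl, hlp⟩ := Nat.sInf_mem hne
    rw [len, ← hl, ← hlp]
    exact inv_word_le l


/-- `i` and `j` lie in the same `B`-block. -/
def SB (B : Set (Fin N)) (i j : Fin (N + 1)) : Prop :=
  ∀ k : Fin N, ((i : ℕ) ≤ (k : ℕ) ∧ (k : ℕ) < (j : ℕ)) ∨
    ((j : ℕ) ≤ (k : ℕ) ∧ (k : ℕ) < (i : ℕ)) → k ∈ B

lemma SB_refl (B : Set (Fin N)) (i : Fin (N + 1)) : SB B i i := by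
  intro k hk; omega

lemma SB_symm {B : Set (Fin N)} {i j : Fin (N + 1)} (h : SB B i j) : SB B j i := by
  intro k hk; exact h k (by omega)

lemma SB_trans {B : Set (Fin N)} {i j l : Fin (N + 1)} (h1 : SB B i j) (h2 : SB B j l) :
    SB B i l := by
  intro k hk
  rcases le_or_gt (j : ℕ) (k : ℕ) with h | h
  · rcases hk with hk | hk
    · exact h2 k (Or.inl ⟨h, by omega⟩)
    · exact h1 k (Or.inr ⟨h, by omega⟩)
  · rcases hk with hk | hk
    · exact h1 k (Or.inl ⟨hk.1, by omega⟩)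
    · exact h2 k (Or.inr ⟨hk.1, by omega⟩)

lemma SB_tau {B : Set (Fin N)} {k : Fin N} (hk : k ∈ B) (x : Fin (N + 1)) :
    SB B x (tau N k x) := by
  rw [tau_apply]
  have h1 : ((k.castSucc : Fin (N + 1)) : ℕ) = (k : ℕ) := rfl
  have h2 : ((k.succ : Fin (N + 1)) : ℕ) = (k : ℕ) + 1 := rfl
  split_ifs with a b
  · subst a
    intro k' hk'
    have : k' = k := by
      apply Fin.ext
      simp only [h1, h2] at hk'
      omega
    rwa [this]
  · subst b
    intro k' hk'
    have : k' = k := by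
      apply Fin.ext
      simp only [h1, h2] at hk'
      omega
    rwa [this]
  · exact SB_refl B x

lemma tau_mem_young {B : Set (Fin N)} {k : Fin N} (hk : k ∈ B) :
    tau N k ∈ youngSubgroup N B :=
  Subgroup.subset_closure ⟨k, hk, rfl⟩

lemma mem_young_iff {B : Set (Fin N)} {σ : Equiv.Perm (Fin (N + 1))} :
    σ ∈ youngSubgroup N B ↔ ∀ i, SB B i (σ i) := by
  constructor
  · intro h
    induction h using Subgroup.closure_induction with
    | mem x hx =>
      obtain ⟨k, hk, rfl⟩ := hx
      exact SB_tau hk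
    | one => intro i; exact SB_refl B i
    | mul x y _ _ hx hy =>
      intro i
      exact SB_trans (hy i) (hx (y i))
    | inv x _ hx =>
      intro i
      have := hx (x⁻¹ i)
      simp only [Equiv.Perm.apply_inv_self] at this
      exact SB_symm this
  · intro h
    generalize hn : inv σ = n
    induction n generalizing σ with
    | zero =>
      rw [inv_eq_zero_iff] at hn
      rw [hn]; exact one_mem _
    | succ n ih =>
      have hne : σ ≠ 1 := by rintro rfl; rw [inv_one] at hn; omega
      obtain ⟨k, hk⟩ := exists_descent hne
      have hkB : k ∈ B := by
        by_contra hkB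
        have e1 := h k.castSucc
        have e2 := h k.succ
        have h1 : ((k.castSucc : Fin (N + 1)) : ℕ) = (k : ℕ) := rfl
        have h2 : ((k.succ : Fin (N + 1)) : ℕ) = (k : ℕ) + 1 := rfl
        have c1 : ¬((k.castSucc : Fin (N+1)) : ℕ) ≤ (k:ℕ) ∨ ¬(k:ℕ) < ((σ k.castSucc : Fin (N+1)) : ℕ) := by
          by_contra hc
          push_neg at hc
          exact hkB (e1 k (Or.inl ⟨hc.1, hc.2⟩))
        have c2 : ¬((σ k.succ : Fin (N+1)) : ℕ) ≤ (k:ℕ) ∨ ¬(k:ℕ) < ((k.succ : Fin (N+1)) : ℕ) := by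
          by_contra hc
          push_neg at hc
          exact hkB (e2 k (Or.inr ⟨hc.1, hc.2⟩))
        rw [Fin.lt_def] at hk
        omega
      have hd : (σ * tau N k) k.castSucc < (σ * tau N k) k.succ := by
        simpa [Equiv.Perm.mul_apply, tau_apply, Fin.ext_iff] using hk
      have hinv : inv (σ * tau N k) = n := by
        have := inv_mul_tau_of_descent hk
        omega
      have hSB : ∀ i, SB B i ((σ * tau N k) i) := by
        intro i
        exact SB_trans (SB_tau hkB i) (h (tau N k i))
      have hmem := ih hSB hinv
      have : σ = (σ * tau N k) * tau N k := by
        rw [mul_assoc]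
        have h4 : tau N k * tau N k = 1 := by rw [tau]; exact Equiv.swap_mul_self _ _
        rw [h4, mul_one]
      rw [this]
      exact mul_mem hmem (tau_mem_young hkB)

lemma SB_apply {B : Set (Fin N)} {b : Equiv.Perm (Fin (N + 1))}
    (hb : b ∈ youngSubgroup N B) (i : Fin (N + 1)) : SB B i (b i) :=
  mem_young_iff.mp hb i

/-- Crossing a block boundary preserves order. -/
lemma lt_of_cross {B : Set (Fin N)} {i i' j j' : Fin (N + 1)}
    (h1 : SB B i i') (h2 : SB B j j') (h3 : ¬ SB B i j) (h4 : i < j) : i' < j' := by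
  rw [SB] at h3
  push_neg at h3
  obtain ⟨k, hk1, hk2⟩ := h3
  have e1 := h1 k
  have e2 := h2 k
  rw [Fin.lt_def] at h4 ⊢
  by_contra hc
  push_neg at hc
  rcases hk1 with h | h
  · have c1 : ¬((i : ℕ) ≤ (k : ℕ) ∧ (k : ℕ) < (i' : ℕ) ∨ (i' : ℕ) ≤ (k : ℕ) ∧ (k : ℕ) < (i : ℕ)) :=
      fun hh => hk2 (e1 hh)
    have c2 : ¬((j : ℕ) ≤ (k : ℕ) ∧ (k : ℕ) < (j' : ℕ) ∨ (j' : ℕ) ≤ (k : ℕ) ∧ (k : ℕ) < (j : ℕ)) :=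
      fun hh => hk2 (e2 hh)
    omega
  · omega

/-- Not in the same block: transport along blocks. -/
lemma not_SB_apply {B : Set (Fin N)} {i j i' j' : Fin (N + 1)}
    (h1 : SB B i i') (h2 : SB B j j') (h3 : ¬ SB B i j) : ¬ SB B i' j' := by
  intro hc
  exact h3 (SB_trans h1 (SB_trans hc (SB_symm h2)))

/-- `π` is increasing on each `B`-block. -/
def IncOn (B : Set (Fin N)) (π : Equiv.Perm (Fin (N + 1))) : Prop :=
  ∀ ⦃i j : Fin (N + 1)⦄, i < j → SB B i j → π i < π j

lemma incOn_one (B : Set (Fin N)) : IncOn B (1 : Equiv.Perm (Fin (N + 1))) := by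
  intro i j h _; exact h

lemma incOn_of_adjacent {B : Set (Fin N)} {π : Equiv.Perm (Fin (N + 1))}
    (h : ∀ k : Fin N, k ∈ B → π k.castSucc < π k.succ) : IncOn B π := by
  have key : ∀ d : ℕ, ∀ i j : Fin (N + 1), (j : ℕ) = (i : ℕ) + d + 1 → SB B i j → π i < π j := by
    intro d
    induction d with
    | zero =>
      intro i j hj hSB
      have hiN : (i : ℕ) < N := by omega
      set k : Fin N := ⟨(i : ℕ), hiN⟩ with hk
      have hkc : k.castSucc = i := by apply Fin.ext; simp [hk]
      have hks : k.succ = j := by apply Fin.ext; simp [hk]; omega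
      have hkB : k ∈ B := hSB k (by simp [hk]; omega)
      rw [← hkc, ← hks]
      exact h k hkB
    | succ d ih =>
      intro i j hj hSB
      have hjN : (i : ℕ) + d + 1 < N + 1 := by omega
      set j' : Fin (N + 1) := ⟨(i : ℕ) + d + 1, hjN⟩ with hj'
      have h1 : π i < π j' := by
        apply ih i j' (by simp [hj']) (fun k hk => hSB k (by simp [hj'] at hk ⊢; omega))
      have h2 : π j' < π j := by
        have hj'N : ((j' : Fin (N+1)) : ℕ) < N := by simp [hj']; omega
        set k : Fin N := ⟨(j' : ℕ), by simp [hj']; omega⟩ with hk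
        have hkc : k.castSucc = j' := by apply Fin.ext; simp [hk]
        have hks : k.succ = j := by apply Fin.ext; simp [hk, hj']; omega
        have hkB : k ∈ B := hSB k (by simp [hk, hj']; omega)
        rw [← hkc, ← hks]
        exact h k hkB
      exact lt_trans h1 h2
  intro i j hij hSB
  rw [Fin.lt_def] at hij
  exact key ((j : ℕ) - (i : ℕ) - 1) i j (by omega) hSB

lemma exists_descent_in {B : Set (Fin N)} {π : Equiv.Perm (Fin (N + 1))}
    (h : ¬ IncOn B π) : ∃ k : Fin N, k ∈ B ∧ π k.succ < π k.castSucc := by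
  by_contra hc
  push_neg at hc
  apply h
  apply incOn_of_adjacent
  intro k hk
  have := hc k hk
  rcases lt_or_eq_of_le this with h1 | h1
  · exact h1
  · exact absurd (π.injective h1) (by simp [Fin.ext_iff])

open scoped Classical

/-- Within-block inversions of `π * b` are exactly inversions of `b`. -/
lemma Inv_filter_SB {B : Set (Fin N)} {π b : Equiv.Perm (Fin (N + 1))}
    (hπ : IncOn B π) (hb : b ∈ youngSubgroup N B) :
    (Inv (π * b)).filter (fun p => SB B p.1 p.2) = Inv b := by
  ext ⟨i, j⟩
  simp only [Finset.mem_filter, mem_Inv, Equiv.Perm.mul_apply]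
  constructor
  · rintro ⟨⟨hij, hinv⟩, hSB⟩
    refine ⟨hij, ?_⟩
    rcases lt_trichotomy (b i) (b j) with h1 | h1 | h1
    · exfalso
      have hSB' : SB B (b i) (b j) :=
        SB_trans (SB_symm (SB_apply hb i)) (SB_trans hSB (SB_apply hb j))
      exact absurd (hπ h1 hSB') (not_lt.mpr (le_of_lt hinv))
    · exact absurd (b.injective h1) (ne_of_lt hij)
    · exact h1
  · rintro ⟨hij, hinv⟩
    have hSB : SB B i j := by
      by_contra hc
      have := lt_of_cross (SB_apply hb i) (SB_apply hb j) hc hij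
      exact absurd this (not_lt.mpr (le_of_lt hinv))
    have hSB' : SB B (b j) (b i) :=
      SB_trans (SB_symm (SB_apply hb j)) (SB_trans (SB_symm hSB) (SB_apply hb i))
    exact ⟨⟨hij, hπ hinv hSB'⟩, hSB⟩

/-- Cross-block inversions of `π * b` biject with cross-block inversions of `π`. -/
lemma Inv_filter_not_SB {B : Set (Fin N)} {π b : Equiv.Perm (Fin (N + 1))}
    (hb : b ∈ youngSubgroup N B) :
    ((Inv (π * b)).filter (fun p => ¬ SB B p.1 p.2)).card =
      ((Inv π).filter (fun p => ¬ SB B p.1 p.2)).card := by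
  have hb' : b⁻¹ ∈ youngSubgroup N B := inv_mem hb
  apply Finset.card_nbij' (fun p => (b p.1, b p.2)) (fun p => (b⁻¹ p.1, b⁻¹ p.2))
  · rintro ⟨i, j⟩ hp
    simp only [Finset.mem_coe, Finset.mem_filter, mem_Inv, Equiv.Perm.mul_apply] at hp ⊢
    obtain ⟨⟨hij, hinv⟩, hSB⟩ := hp
    refine ⟨⟨lt_of_cross (SB_apply hb i) (SB_apply hb j) hSB hij, hinv⟩, ?_⟩
    exact not_SB_apply (SB_apply hb i) (SB_apply hb j) hSB
  · rintro ⟨i, j⟩ hp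
    simp only [Finset.mem_coe, Finset.mem_filter, mem_Inv, Equiv.Perm.mul_apply] at hp ⊢
    obtain ⟨⟨hij, hinv⟩, hSB⟩ := hp
    have h1 := lt_of_cross (SB_apply hb' i) (SB_apply hb' j) hSB hij
    refine ⟨⟨h1, by simpa using hinv⟩, ?_⟩
    exact not_SB_apply (SB_apply hb' i) (SB_apply hb' j) hSB
  · rintro ⟨i, j⟩ _; simp
  · rintro ⟨i, j⟩ _; simp

/-- Length additivity for a block-increasing permutation times a Young element. -/
lemma inv_mul_young {B : Set (Fin N)} {π b : Equiv.Perm (Fin (N + 1))}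
    (hπ : IncOn B π) (hb : b ∈ youngSubgroup N B) :
    inv (π * b) = inv π + inv b := by
  have hsplit : ∀ σ : Equiv.Perm (Fin (N + 1)),
      inv σ = ((Inv σ).filter (fun p => SB B p.1 p.2)).card +
        ((Inv σ).filter (fun p => ¬ SB B p.1 p.2)).card := by
    intro σ
    rw [inv, ← Finset.card_filter_add_card_filter_not (p := fun p => SB B p.1 p.2)]
  have hπ0 : (Inv π).filter (fun p => SB B p.1 p.2) = ∅ := by
    rw [Finset.filter_eq_empty_iff]
    rintro ⟨i, j⟩ hp hSB
    rw [mem_Inv] at hp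
    exact absurd (hπ hp.1 hSB) (not_lt.mpr (le_of_lt hp.2))
  rw [hsplit (π * b), hsplit π, Inv_filter_SB hπ hb, Inv_filter_not_SB hb, hπ0]
  simp [inv]
  omega

lemma incOn_inv_mul_young {C : Set (Fin N)} {π a : Equiv.Perm (Fin (N + 1))}
    (hπ : IncOn C π⁻¹) (ha : a ∈ youngSubgroup N C) :
    inv (a * π) = inv a + inv π := by
  have h1 : inv (a * π) = inv ((a * π)⁻¹) := (inv_inv_eq _).symm
  rw [h1, mul_inv_rev, inv_mul_young hπ (inv_mem ha), inv_inv_eq, inv_inv_eq]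
  omega

/-- Uniqueness of the block-increasing element of a left coset. -/
lemma incOn_unique {B : Set (Fin N)} {π b : Equiv.Perm (Fin (N + 1))}
    (hπ : IncOn B π) (hπb : IncOn B (π * b)) (hb : b ∈ youngSubgroup N B) : b = 1 := by
  have h1 : inv (π * b) = inv π + inv b := inv_mul_young hπ hb
  have h2 : inv (π * b * b⁻¹) = inv (π * b) + inv b⁻¹ := inv_mul_young hπb (inv_mem hb)
  rw [mul_assoc, mul_inv_cancel, mul_one] at h2
  rw [← inv_eq_zero_iff]
  omega

/-- The double-coset-invariant lower bound for the inversion number. -/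
def Mnum (C B : Set (Fin N)) (σ : Equiv.Perm (Fin (N + 1))) : ℕ :=
  ((Inv σ).filter (fun p => ¬ SB B p.1 p.2 ∧ ¬ SB C (σ p.1) (σ p.2))).card

lemma Mnum_le_inv (C B : Set (Fin N)) (σ : Equiv.Perm (Fin (N + 1))) :
    Mnum C B σ ≤ inv σ :=
  Finset.card_filter_le _ _

lemma Mnum_mul_right {C B : Set (Fin N)} {σ b : Equiv.Perm (Fin (N + 1))}
    (hb : b ∈ youngSubgroup N B) : Mnum C B (σ * b) = Mnum C B σ := by
  have hb' : b⁻¹ ∈ youngSubgroup N B := inv_mem hb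
  apply Finset.card_nbij' (fun p => (b p.1, b p.2)) (fun p => (b⁻¹ p.1, b⁻¹ p.2))
  · rintro ⟨i, j⟩ hp
    rw [Finset.mem_coe, Finset.mem_filter] at hp ⊢
    simp only [Finset.mem_coe, Finset.mem_filter, mem_Inv, Equiv.Perm.mul_apply] at hp ⊢
    obtain ⟨⟨hij, hinv⟩, hSB, hSC⟩ := hp
    exact ⟨⟨lt_of_cross (SB_apply hb i) (SB_apply hb j) hSB hij, hinv⟩,
      not_SB_apply (SB_apply hb i) (SB_apply hb j) hSB, hSC⟩
  · rintro ⟨i, j⟩ hp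
    rw [Finset.mem_coe, Finset.mem_filter] at hp ⊢
    simp only [Finset.mem_coe, Finset.mem_filter, mem_Inv, Equiv.Perm.mul_apply] at hp ⊢
    obtain ⟨⟨hij, hinv⟩, hSB, hSC⟩ := hp
    refine ⟨⟨lt_of_cross (SB_apply hb' i) (SB_apply hb' j) hSB hij, by simpa using hinv⟩,
      not_SB_apply (SB_apply hb' i) (SB_apply hb' j) hSB, by simpa using hSC⟩
  · rintro ⟨i, j⟩ _; simp
  · rintro ⟨i, j⟩ _; simp

lemma Mnum_mul_left {C B : Set (Fin N)} {σ a : Equiv.Perm (Fin (N + 1))}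
    (ha : a ∈ youngSubgroup N C) : Mnum C B (a * σ) = Mnum C B σ := by
  apply Finset.card_nbij' id id
  · rintro ⟨i, j⟩ hp
    rw [Finset.mem_coe, Finset.mem_filter] at hp ⊢
    simp only [Finset.mem_coe, Finset.mem_filter, mem_Inv, Equiv.Perm.mul_apply, id] at hp ⊢
    obtain ⟨⟨hij, hinv⟩, hSB, hSC⟩ := hp
    have hC1 := SB_apply ha (σ i)
    have hC2 := SB_apply ha (σ j)
    have hSC' : ¬ SB C (σ i) (σ j) := fun hc =>
      hSC (SB_trans (SB_symm hC1) (SB_trans hc hC2))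
    have hlt : σ j < σ i := by
      by_contra hc
      push_neg at hc
      rcases lt_or_eq_of_le hc with h1 | h1
      · exact absurd (lt_of_cross hC1 hC2 hSC' h1) (not_lt.mpr (le_of_lt hinv))
      · exact ne_of_lt hij (σ.injective h1)
    exact ⟨⟨hij, hlt⟩, hSB, hSC'⟩
  · rintro ⟨i, j⟩ hp
    rw [Finset.mem_coe, Finset.mem_filter] at hp ⊢
    simp only [Finset.mem_coe, Finset.mem_filter, mem_Inv, Equiv.Perm.mul_apply, id] at hp ⊢
    obtain ⟨⟨hij, hinv⟩, hSB, hSC⟩ := hp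
    have hC1 := SB_apply ha (σ i)
    have hC2 := SB_apply ha (σ j)
    have hSC' : ¬ SB C (a (σ i)) (a (σ j)) :=
      not_SB_apply hC1 hC2 hSC
    have hlt : a (σ j) < a (σ i) := lt_of_cross hC2 hC1 (fun hc => hSC (SB_symm hc)) hinv
    exact ⟨⟨hij, hlt⟩, hSB, hSC'⟩
  · rintro p _; rfl
  · rintro p _; rfl

lemma Mnum_eq_inv {C B : Set (Fin N)} {π : Equiv.Perm (Fin (N + 1))}
    (h1 : IncOn B π) (h2 : IncOn C π⁻¹) : Mnum C B π = inv π := by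
  apply le_antisymm (Mnum_le_inv C B π)
  rw [Mnum, inv]
  apply Finset.card_le_card
  intro ⟨i, j⟩ hp
  rw [mem_Inv] at hp
  obtain ⟨hij, hinv⟩ := hp
  rw [Finset.mem_filter, mem_Inv]
  refine ⟨⟨hij, hinv⟩, ?_, ?_⟩
  · intro hc
    exact absurd (h1 hij hc) (not_lt.mpr (le_of_lt hinv))
  · intro hc
    have := h2 hinv (SB_symm hc)
    simp only [Equiv.Perm.inv_apply_self] at this
    exact absurd this (not_lt.mpr (le_of_lt hij))

/-- Characterization of distinguished double coset representatives. -/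
lemma isMinDouble_iff {C B : Set (Fin N)} {π : Equiv.Perm (Fin (N + 1))} :
    IsMinDouble N (youngSubgroup N C) (youngSubgroup N B) π ↔ IncOn B π ∧ IncOn C π⁻¹ := by
  constructor
  · intro h
    constructor
    · by_contra hc
      obtain ⟨k, hkB, hk⟩ := exists_descent_in hc
      have := h 1 (one_mem _) (tau N k) (tau_mem_young hkB)
      rw [one_mul, len_eq_inv, len_eq_inv] at this
      have := inv_mul_tau_of_descent hk
      omega
    · by_contra hc
      obtain ⟨k, hkC, hk⟩ := exists_descent_in hc
      have h2 := h (tau N k) (tau_mem_young hkC) 1 (one_mem _)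
      rw [mul_one, len_eq_inv, len_eq_inv] at h2
      have h3 : inv (π⁻¹ * tau N k) + 1 = inv π⁻¹ := inv_mul_tau_of_descent hk
      have htinv : (tau N k)⁻¹ = tau N k := by rw [tau]; exact Equiv.swap_inv _ _
      have h4 : inv (tau N k * π) = inv (π⁻¹ * tau N k) := by
        rw [← inv_inv_eq (tau N k * π), mul_inv_rev, htinv]
      have h5 : inv π⁻¹ = inv π := inv_inv_eq π
      omega
  · rintro ⟨h1, h2⟩
    intro a ha b hb
    rw [len_eq_inv, len_eq_inv]
    calc inv π = Mnum C B π := (Mnum_eq_inv h1 h2).symm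
    _ = Mnum C B (a * π * b) := by rw [Mnum_mul_right hb, Mnum_mul_left ha]
    _ ≤ inv (a * π * b) := Mnum_le_inv C B _

/-! ### The special double coset representatives and the conjugate Young subgroup -/

def al (q : Fin (N + 1)) : Equiv.Perm (Fin (N + 1)) := Fin.cycleRange q

lemma al_val_lt {q x : Fin (N + 1)} (h : (x : ℕ) < (q : ℕ)) : ((al q) x : ℕ) = (x : ℕ) + 1 :=
  Fin.coe_cycleRange_of_lt (by rwa [Fin.lt_def])

lemma al_self (q : Fin (N + 1)) : (al q) q = 0 := Fin.cycleRange_self q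

lemma al_gt {q x : Fin (N + 1)} (h : (q : ℕ) < (x : ℕ)) : (al q) x = x :=
  Fin.cycleRange_of_gt (by rwa [Fin.lt_def])

lemma al_inv_zero (q : Fin (N + 1)) : (al q)⁻¹ 0 = q := by
  rw [← al_self q]
  exact Equiv.Perm.inv_apply_self _ _

lemma al_inv_le {q v : Fin (N + 1)} (hv : (v : ℕ) ≠ 0) (h : (v : ℕ) ≤ (q : ℕ)) :
    (((al q)⁻¹ v : Fin (N + 1)) : ℕ) = (v : ℕ) - 1 := by
  have huv : (al q) ((al q)⁻¹ v) = v := Equiv.Perm.apply_inv_self _ _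
  set u := (al q)⁻¹ v with hu
  rcases lt_trichotomy (u : ℕ) (q : ℕ) with h1 | h1 | h1
  · have := al_val_lt h1
    rw [huv] at this
    omega
  · have hq : u = q := Fin.ext h1
    rw [hq, al_self] at huv
    exact absurd (congrArg Fin.val huv.symm) hv
  · have := al_gt h1
    rw [huv] at this
    rw [← this] at h1
    omega

lemma al_inv_gt {q v : Fin (N + 1)} (h : (q : ℕ) < (v : ℕ)) : (al q)⁻¹ v = v := by
  have huv : (al q) ((al q)⁻¹ v) = v := Equiv.Perm.apply_inv_self _ _
  set u := (al q)⁻¹ v with hu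
  rcases lt_trichotomy (u : ℕ) (q : ℕ) with h1 | h1 | h1
  · have := al_val_lt h1
    rw [huv] at this
    omega
  · have hq : u = q := Fin.ext h1
    rw [hq, al_self] at huv
    rw [← huv] at h
    simp at h
  · have := al_gt h1
    rw [huv] at this
    rw [this]

/-- `q` is the minimum of its `Bl`-block. -/
def BlockMin (Bl : Set (Fin N)) (q : Fin (N + 1)) : Prop :=
  ∀ x : Fin (N + 1), SB Bl x q → (q : ℕ) ≤ (x : ℕ)

lemma blockMin_of_incOn {Bl : Set (Fin N)} {π : Equiv.Perm (Fin (N + 1))}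
    (hπ : IncOn Bl π) : BlockMin Bl (π⁻¹ 0) := by
  intro x hx
  by_contra hc
  push_neg at hc
  have h1 : x < π⁻¹ 0 := by rwa [Fin.lt_def]
  have := hπ h1 hx
  simp only [Equiv.Perm.apply_inv_self] at this
  exact Fin.not_lt_zero _ this

/-- `(al q)⁻¹` is increasing on nonzero values. -/
lemma al_inv_lt {q x y : Fin (N + 1)} (hxy : x < y) (hx : (x : ℕ) ≠ 0) :
    (al q)⁻¹ x < (al q)⁻¹ y := by
  rw [Fin.lt_def] at hxy ⊢
  have hy : (y : ℕ) ≠ 0 := by omega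
  rcases le_or_gt (y : ℕ) (q : ℕ) with h1 | h1
  · rw [al_inv_le hx (by omega), al_inv_le hy h1]
    omega
  · rcases le_or_gt (x : ℕ) (q : ℕ) with h2 | h2
    · rw [al_inv_le hx h2, al_inv_gt h1]
      omega
    · rw [al_inv_gt h2, al_inv_gt h1]
      omega

/-- `al q` is increasing off `q`. -/
lemma al_lt_of_ne {q x y : Fin (N + 1)} (hxy : x < y) (hx : x ≠ q) (hy : y ≠ q) :
    (al q) x < (al q) y := by
  rw [Fin.lt_def] at hxy ⊢
  have hx' : (x : ℕ) ≠ (q : ℕ) := fun hh => hx (Fin.ext hh)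
  have hy' : (y : ℕ) ≠ (q : ℕ) := fun hh => hy (Fin.ext hh)
  rcases lt_trichotomy (y : ℕ) (q : ℕ) with h1 | h1 | h1
  · rw [al_val_lt (by omega), al_val_lt h1]
    omega
  · omega
  · rcases lt_trichotomy (x : ℕ) (q : ℕ) with h2 | h2 | h2
    · rw [al_val_lt h2]
      have := congrArg Fin.val (al_gt h1)
      omega
    · omega
    · have hh1 := congrArg Fin.val (al_gt h1)
      have hh2 := congrArg Fin.val (al_gt h2)
      omega

lemma al_incOn {Bl : Set (Fin N)} {q : Fin (N + 1)} (hq : BlockMin Bl q) :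
    IncOn Bl (al q) := by
  intro i j hij hSB
  have hjq : j ≠ q := by
    intro h
    subst h
    have := hq i hSB
    rw [Fin.lt_def] at hij
    omega
  by_cases hiq : i = q
  · rw [hiq, al_self]
    have hne : (al q) j ≠ 0 := by
      intro h0
      rw [← al_self q] at h0
      exact hjq ((al q).injective h0)
    exact Fin.pos_of_ne_zero hne
  · -- rule out i < q < j
    rcases lt_trichotomy (q : ℕ) (j : ℕ) with h1 | h1 | h1
    · by_cases h2 : (i : ℕ) < (q : ℕ)
      · exfalso
        have hSBq : SB Bl i q := by
          intro k hk
          apply hSB k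
          rw [Fin.lt_def] at hij
          omega
        have := hq i hSBq
        omega
      · exact al_lt_of_ne hij hiq hjq
    · exact absurd (Fin.ext h1.symm) hjq
    · exact al_lt_of_ne hij hiq hjq

/-- The index set of the Young subgroup `S1 ⊓ (al q) S_Bl (al q)⁻¹`. -/
def nuS (q : Fin (N + 1)) (Bl : Set (Fin N)) : Set (Fin N) :=
  {k | ((k : ℕ) < (q : ℕ) ∧ 1 ≤ (k : ℕ) ∧ ∀ k' : Fin N, (k' : ℕ) = (k : ℕ) - 1 → k' ∈ Bl) ∨
    ((q : ℕ) < (k : ℕ) ∧ k ∈ Bl)}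

lemma SB_nu_of_lt {Bl : Set (Fin N)} {q u v : Fin (N + 1)} (hq : BlockMin Bl q)
    (huv : u < v) :
    SB (nuS q Bl) u v ↔ ((u : ℕ) ≠ 0 ∧ SB Bl ((al q)⁻¹ u) ((al q)⁻¹ v)) := by
  rw [Fin.lt_def] at huv
  constructor
  · intro h
    have hvN := v.isLt
    have hqN' := q.isLt
    have hu0 : (u : ℕ) ≠ 0 := by
      intro h0
      have hN : 0 < N := by omega
      have hval : ((⟨0, hN⟩ : Fin N) : ℕ) = 0 := rfl
      have hmem := h ⟨0, hN⟩ (by omega)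
      rcases hmem with ⟨h1, h2, h3⟩ | ⟨h1, h2⟩
      · omega
      · omega
    refine ⟨hu0, ?_⟩
    have hv0 : (v : ℕ) ≠ 0 := by omega
    -- no straddle
    have hstr : ¬((u : ℕ) ≤ (q : ℕ) ∧ (q : ℕ) < (v : ℕ)) := by
      rintro ⟨hs1, hs2⟩
      have hqN : (q : ℕ) < N := by omega
      have hval : ((⟨(q : ℕ), hqN⟩ : Fin N) : ℕ) = (q : ℕ) := rfl
      have hmem := h ⟨(q : ℕ), hqN⟩ (by omega)
      rcases hmem with ⟨h1, h2, h3⟩ | ⟨h1, h2⟩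
      · omega
      · omega
    rcases le_or_gt (v : ℕ) (q : ℕ) with hcase | hcase
    · -- both ≤ q
      have e1 := al_inv_le (q := q) hu0 (by omega)
      have e2 := al_inv_le hv0 hcase
      intro k' hk'
      have hk'1 : (k' : ℕ) + 1 < N := by omega
      have hval : ((⟨(k' : ℕ) + 1, hk'1⟩ : Fin N) : ℕ) = (k' : ℕ) + 1 := rfl
      have hmem := h ⟨(k' : ℕ) + 1, hk'1⟩ (by omega)
      rcases hmem with ⟨h1, h2, h3⟩ | ⟨h1, h2⟩
      · exact h3 k' (by omega)
      · omega
    · -- both > q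
      have hu : (q : ℕ) < (u : ℕ) := by omega
      have e1 := congrArg Fin.val (al_inv_gt hu)
      have e2 := congrArg Fin.val (al_inv_gt hcase)
      have e1' : (al q)⁻¹ u = u := al_inv_gt hu
      have e2' : (al q)⁻¹ v = v := al_inv_gt hcase
      rw [e1', e2']
      intro k' hk'
      have hmem := h k' (by omega)
      rcases hmem with ⟨h1, h2, h3⟩ | ⟨h1, h2⟩
      · exfalso; omega
      · exact h2
  · rintro ⟨hu0, hBl⟩
    have hv0 : (v : ℕ) ≠ 0 := by omega
    have hvN := v.isLt
    have hqN' := q.isLt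
    -- rule out straddle using hq
    have hstr : ¬((u : ℕ) ≤ (q : ℕ) ∧ (q : ℕ) < (v : ℕ)) := by
      rintro ⟨hs1, hs2⟩
      have e1 := al_inv_le hu0 hs1
      have e2 := congrArg Fin.val (al_inv_gt hs2)
      have hx : SB Bl ((al q)⁻¹ u) q := by
        intro k hk
        exact hBl k (by omega)
      have := hq _ hx
      omega
    rcases le_or_gt (v : ℕ) (q : ℕ) with hcase | hcase
    · have e1 := al_inv_le (q := q) hu0 (by omega)
      have e2 := al_inv_le hv0 hcase
      intro k hk
      left
      refine ⟨by omega, by omega, ?_⟩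
      intro k' hk'
      exact hBl k' (by omega)
    · have hu : (q : ℕ) < (u : ℕ) := by omega
      have e1 := congrArg Fin.val (al_inv_gt hu)
      have e2 := congrArg Fin.val (al_inv_gt hcase)
      intro k hk
      right
      refine ⟨by omega, ?_⟩
      exact hBl k (by omega)

lemma SB_nu_iff {Bl : Set (Fin N)} {q u v : Fin (N + 1)} (hq : BlockMin Bl q) :
    SB (nuS q Bl) u v ↔
      (u = v ∨ ((u : ℕ) ≠ 0 ∧ (v : ℕ) ≠ 0 ∧ SB Bl ((al q)⁻¹ u) ((al q)⁻¹ v))) := by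
  rcases lt_trichotomy u v with h | h | h
  · rw [SB_nu_of_lt hq h]
    constructor
    · rintro ⟨h1, h2⟩
      right
      rw [Fin.lt_def] at h
      exact ⟨h1, by omega, h2⟩
    · rintro (rfl | ⟨h1, h2, h3⟩)
      · exact absurd h (lt_irrefl _)
      · exact ⟨h1, h3⟩
  · subst h
    simp [SB_refl]
  · rw [show SB (nuS q Bl) u v ↔ SB (nuS q Bl) v u from ⟨SB_symm, SB_symm⟩,
      SB_nu_of_lt hq h]
    constructor
    · rintro ⟨h1, h2⟩
      right
      rw [Fin.lt_def] at h
      exact ⟨by omega, h1, SB_symm h2⟩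
    · rintro (rfl | ⟨h1, h2, h3⟩)
      · exact absurd h (lt_irrefl _)
      · exact ⟨h2, SB_symm h3⟩

/-! ### Subgroup glue -/

def C0 : Set (Fin N) := {i : Fin N | (i : ℕ) ≠ 0}

variable {N : ℕ}  -- keep implicit below

lemma SB_C0_ne_zero {u v : Fin (N + 1)} (h : SB (C0 (N := N)) u v) (huv : u < v) :
    (u : ℕ) ≠ 0 := by
  rw [Fin.lt_def] at huv
  intro h0
  have hN : 0 < N := by
    have := v.isLt; omega
  have hval : ((⟨0, hN⟩ : Fin N) : ℕ) = 0 := rfl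
  have := h ⟨0, hN⟩ (by omega)
  exact this hval

lemma SB_mono {B B' : Set (Fin N)} (hBB : B ⊆ B') {u v : Fin (N + 1)} (h : SB B u v) :
    SB B' u v := fun k hk => hBB (h k hk)

lemma SB_inter {B B' : Set (Fin N)} {u v : Fin (N + 1)} :
    SB (B ∩ B') u v ↔ SB B u v ∧ SB B' u v := by
  constructor
  · intro h
    exact ⟨SB_mono Set.inter_subset_left h, SB_mono Set.inter_subset_right h⟩
  · rintro ⟨h1, h2⟩ k hk
    exact ⟨h1 k hk, h2 k hk⟩

lemma young_inf (B B' : Set (Fin N)) :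
    youngSubgroup N B ⊓ youngSubgroup N B' = youngSubgroup N (B ∩ B') := by
  ext σ
  rw [Subgroup.mem_inf, mem_young_iff, mem_young_iff, mem_young_iff]
  constructor
  · rintro ⟨h1, h2⟩ i
    exact SB_inter.mpr ⟨h1 i, h2 i⟩
  · intro h
    exact ⟨fun i => (SB_inter.mp (h i)).1, fun i => (SB_inter.mp (h i)).2⟩

lemma mem_S1_iff {σ : Equiv.Perm (Fin (N + 1))} : σ ∈ S1 N ↔ σ 0 = 0 := by
  have hS1 : S1 N = youngSubgroup N (C0 (N := N)) := rfl
  rw [hS1, mem_young_iff]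
  constructor
  · intro h
    by_contra hc
    have h0 := h 0
    have hσ0 : ((σ 0 : Fin (N + 1)) : ℕ) ≠ 0 := fun hh => hc (Fin.ext (by simpa using hh))
    have hlt : (0 : Fin (N + 1)) < σ 0 := by
      rw [Fin.lt_def]; simp only [Fin.val_zero]; omega
    exact absurd (SB_C0_ne_zero h0 hlt) (by simp)
  · intro h0 i k hk
    intro hk0
    have hv0 : ((0 : Fin (N + 1)) : ℕ) = 0 := rfl
    rcases hk with ⟨h1, h2⟩ | ⟨h1, h2⟩
    · have hi : i = 0 := Fin.ext (by omega)
      rw [hi, h0] at h2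
      simp at h2
    · have hσi : σ i = 0 := Fin.ext (by omega)
      rw [← h0] at hσi
      have : i = 0 := σ.injective hσi
      rw [this] at h2
      simp at h2

lemma mem_conjSub {π γ : Equiv.Perm (Fin (N + 1))} {K : Subgroup (Equiv.Perm (Fin (N + 1)))} :
    γ ∈ conjSub N π K ↔ π⁻¹ * γ * π ∈ K := by
  simp only [conjSub, Subgroup.mem_map, MulEquiv.coe_toMonoidHom, MulAut.conj_apply]
  constructor
  · rintro ⟨x, hx, rfl⟩
    have : π⁻¹ * (π * x * π⁻¹) * π = x := by group
    rwa [this]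
  · intro h
    exact ⟨π⁻¹ * γ * π, h, by group⟩

lemma conjSub_conjSub (σ α : Equiv.Perm (Fin (N + 1))) (K : Subgroup (Equiv.Perm (Fin (N + 1)))) :
    conjSub N σ (conjSub N α K) = conjSub N (σ * α) K := by
  ext γ
  rw [mem_conjSub, mem_conjSub, mem_conjSub]
  have : α⁻¹ * (σ⁻¹ * γ * σ) * α = (σ * α)⁻¹ * γ * (σ * α) := by group
  rw [this]

lemma conjSub_inf (π : Equiv.Perm (Fin (N + 1))) (A B : Subgroup (Equiv.Perm (Fin (N + 1)))) :
    conjSub N π (A ⊓ B) = conjSub N π A ⊓ conjSub N π B := by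
  ext γ
  simp only [mem_conjSub, Subgroup.mem_inf]

lemma conjSub_S1 {σ : Equiv.Perm (Fin (N + 1))} (hσ : σ ∈ S1 N) :
    conjSub N σ (S1 N) = S1 N := by
  have h0 : σ 0 = 0 := mem_S1_iff.mp hσ
  have h0' : σ⁻¹ 0 = 0 := by
    rw [Equiv.Perm.inv_eq_iff_eq]
    exact h0.symm
  ext γ
  rw [mem_conjSub, mem_S1_iff, mem_S1_iff]
  simp only [Equiv.Perm.mul_apply]
  rw [h0]
  constructor
  · intro h
    have := congrArg σ h
    rw [Equiv.Perm.apply_inv_self, h0] at this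
    exact this
  · intro h
    rw [h, h0']

/-- The key triviality-transfer identity. -/
lemma conj_identity {σ α : Equiv.Perm (Fin (N + 1))} (hσ : σ ∈ S1 N)
    (K H : Subgroup (Equiv.Perm (Fin (N + 1)))) (hH : H ≤ S1 N) :
    H ⊓ conjSub N σ (S1 N ⊓ conjSub N α K) = H ⊓ conjSub N (σ * α) K := by
  rw [conjSub_inf, conjSub_S1 hσ, conjSub_conjSub, ← inf_assoc, inf_eq_left.mpr hH]

lemma incOn_al_inv (q : Fin (N + 1)) : IncOn (C0 (N := N)) (al q)⁻¹ := by
  intro x y hxy hSB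
  exact al_inv_lt hxy (SB_C0_ne_zero hSB hxy)

/-- Uniqueness: a permutation whose inverse is increasing on `{1,…,N}` is determined
by `β⁻¹ 0`. -/
lemma eq_of_incOn_inv {β γ : Equiv.Perm (Fin (N + 1))} (hβ : IncOn (C0 (N := N)) β⁻¹)
    (hγ : IncOn (C0 (N := N)) γ⁻¹) (h0 : β⁻¹ 0 = γ⁻¹ 0) : β = γ := by
  have hb : β * γ⁻¹ ∈ youngSubgroup N (C0 (N := N)) := by
    have : (β * γ⁻¹) 0 = 0 := by
      simp only [Equiv.Perm.mul_apply]
      rw [← h0, Equiv.Perm.apply_inv_self]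
    exact mem_S1_iff.mpr this
  have h2 : IncOn (C0 (N := N)) (β⁻¹ * (β * γ⁻¹)) := by
    have : β⁻¹ * (β * γ⁻¹) = γ⁻¹ := by group
    rwa [this]
  have := incOn_unique hβ h2 hb
  have hβγ : β * γ⁻¹ = 1 := this
  calc β = β * γ⁻¹ * γ := by group
  _ = γ := by rw [hβγ]; group

lemma eq_al {α : Equiv.Perm (Fin (N + 1))} (h2 : IncOn (C0 (N := N)) α⁻¹) :
    α = al (α⁻¹ 0) := by
  apply eq_of_incOn_inv h2 (incOn_al_inv _)
  rw [al_inv_zero]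

/-- The conjugated Young subgroup identity for the special representative. -/
lemma young_nu {Bl : Set (Fin N)} {q : Fin (N + 1)} (hq : BlockMin Bl q) :
    S1 N ⊓ conjSub N (al q) (youngSubgroup N Bl) = youngSubgroup N (nuS q Bl) := by
  ext γ
  rw [Subgroup.mem_inf, mem_S1_iff, mem_conjSub, mem_young_iff, mem_young_iff]
  constructor
  · rintro ⟨h0, h⟩ u
    rw [SB_nu_iff hq]
    by_cases hu : γ u = u
    · left; exact hu.symm
    · right
      have hu0 : (u : ℕ) ≠ 0 := by
        intro hh
        have : u = 0 := Fin.ext (by simpa using hh)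
        rw [this] at hu
        exact hu h0
      have hγu0 : ((γ u : Fin (N + 1)) : ℕ) ≠ 0 := by
        intro hh
        have h1 : γ u = 0 := Fin.ext (by simpa using hh)
        rw [← h0] at h1
        have := γ.injective h1
        rw [this] at hu
        exact hu h0
      refine ⟨hu0, hγu0, ?_⟩
      have := h ((al q)⁻¹ u)
      simp only [Equiv.Perm.mul_apply, Equiv.Perm.apply_inv_self] at this
      exact this
  · intro h
    have h0 : γ 0 = 0 := by
      have := h 0
      rw [SB_nu_iff hq] at this
      rcases this with h' | h'
      · exact h'.symm
      · exact absurd rfl h'.1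
    refine ⟨h0, ?_⟩
    intro i
    have := h (al q i)
    rw [SB_nu_iff hq] at this
    simp only [Equiv.Perm.mul_apply]
    rcases this with h' | h'
    · rw [← h', Equiv.Perm.inv_apply_self]
      exact SB_refl _ _
    · have := h'.2.2
      rwa [Equiv.Perm.inv_apply_self] at this

/-! ### Core computations for the Mackey bijection -/

lemma val_ne_zero_of_ne {x : Fin (N + 1)} (h : x ≠ 0) : (x : ℕ) ≠ 0 :=
  fun hh => h (Fin.ext (by simpa using hh))

lemma ne_of_val_ne_zero {x : Fin (N + 1)} (h : (x : ℕ) ≠ 0) : x ≠ 0 :=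
  fun hh => h (by rw [hh]; rfl)

lemma main1 {Bl : Set (Fin N)} {q : Fin (N + 1)} {σ : Equiv.Perm (Fin (N + 1))}
    (hq : BlockMin Bl q) (hσ0 : σ 0 = 0) (hσν : IncOn (nuS q Bl) σ) :
    IncOn Bl (σ * al q) := by
  intro i j hij hSB
  simp only [Equiv.Perm.mul_apply]
  have hjq : j ≠ q := by
    intro h
    subst h
    have := hq i hSB
    rw [Fin.lt_def] at hij
    omega
  have haljne : (al q) j ≠ 0 := by
    intro h0
    rw [← al_self q] at h0
    exact hjq ((al q).injective h0)
  by_cases hiq : i = q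
  · rw [hiq, al_self, hσ0]
    have : σ ((al q) j) ≠ 0 := by
      intro h0
      rw [← hσ0] at h0
      exact haljne (σ.injective h0)
    exact Fin.pos_of_ne_zero this
  · have haline : (al q) i ≠ 0 := by
      intro h0
      rw [← al_self q] at h0
      exact hiq ((al q).injective h0)
    have hu := al_lt_of_ne hij hiq hjq
    have hSBν : SB (nuS q Bl) ((al q) i) ((al q) j) := by
      rw [SB_nu_iff hq]
      right
      refine ⟨val_ne_zero_of_ne haline, val_ne_zero_of_ne haljne, ?_⟩
      simpa only [Equiv.Perm.inv_apply_self] using hSB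
    exact hσν hu hSBν

lemma main2 {Bm' : Set (Fin N)} {q : Fin (N + 1)} {σ : Equiv.Perm (Fin (N + 1))}
    (hsub : Bm' ⊆ C0 (N := N)) (hσ0 : σ 0 = 0) (hσBm : IncOn Bm' σ⁻¹) :
    IncOn Bm' (σ * al q)⁻¹ := by
  intro u v huv hSBm
  simp only [mul_inv_rev, Equiv.Perm.mul_apply]
  have hu0 : (u : ℕ) ≠ 0 := SB_C0_ne_zero (SB_mono hsub hSBm) huv
  have h1 : σ⁻¹ u < σ⁻¹ v := hσBm huv hSBm
  have hσu0 : ((σ⁻¹ u : Fin (N + 1)) : ℕ) ≠ 0 := by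
    apply val_ne_zero_of_ne
    intro h0
    have : u = σ 0 := by rw [← h0, Equiv.Perm.apply_inv_self]
    rw [hσ0] at this
    exact ne_of_val_ne_zero hu0 this
  exact al_inv_lt h1 hσu0

lemma main3 {Bl : Set (Fin N)} {q : Fin (N + 1)} {π : Equiv.Perm (Fin (N + 1))}
    (hq : BlockMin Bl q) (hπB : IncOn Bl π) :
    IncOn (nuS q Bl) (π * (al q)⁻¹) := by
  intro i j hij hSBν
  simp only [Equiv.Perm.mul_apply]
  rw [SB_nu_iff hq] at hSBν
  rcases hSBν with h | ⟨hi0, hj0, hBl⟩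
  · exact absurd hij (by rw [h]; exact lt_irrefl j)
  · exact hπB (al_inv_lt hij hi0) hBl

lemma main4 {Bm' : Set (Fin N)} {q : Fin (N + 1)} {π : Equiv.Perm (Fin (N + 1))}
    (hsub : Bm' ⊆ C0 (N := N)) (hπ0 : π⁻¹ 0 = q) (hπBm : IncOn Bm' π⁻¹) :
    IncOn Bm' (π * (al q)⁻¹)⁻¹ := by
  intro u v huv hSBm
  simp only [mul_inv_rev, inv_inv, Equiv.Perm.mul_apply]
  have hu0 : (u : ℕ) ≠ 0 := SB_C0_ne_zero (SB_mono hsub hSBm) huv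
  have hv0 : (v : ℕ) ≠ 0 := by
    rw [Fin.lt_def] at huv; omega
  have h1 : π⁻¹ u < π⁻¹ v := hπBm huv hSBm
  have hne1 : π⁻¹ u ≠ q := by
    rw [← hπ0]
    intro h0
    exact hu0 (by rw [π⁻¹.injective h0]; rfl)
  have hne2 : π⁻¹ v ≠ q := by
    rw [← hπ0]
    intro h0
    exact hv0 (by rw [π⁻¹.injective h0]; rfl)
  exact al_lt_of_ne h1 hne1 hne2

end Mk

/-- Mackey decomposition of double coset representatives:
for Young subgroups `S_λ, S_μ` of `S_n` and `S_{μ¹} = S_{1,n-1} ∩ S_μ`, the map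
`(σ, α) ↦ σ α` is a bijection from the set of pairs with `α` a distinguished
`S_{1,n-1}`-`S_λ` double coset representative and `σ ∈ S_{1,n-1}` a
distinguished `S_{μ¹}`-`S_{ν(α)}` double coset representative
(`S_{ν(α)} = S_{1,n-1} ∩ α S_λ α⁻¹`) with `S_{μ¹} ∩ σ S_{ν(α)} σ⁻¹ = e`,
onto the set of distinguished `S_{μ¹}`-`S_λ` double coset representatives `π`
with `S_{μ¹} ∩ π S_λ π⁻¹ = e`. -/
theorem mackey_double_coset_bijection (Bl Bm : Set (Fin N)) :
    Set.BijOn (fun p : Equiv.Perm (Fin (N + 1)) × Equiv.Perm (Fin (N + 1)) => p.1 * p.2)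
      {p | IsMinDouble N (S1 N) (youngSubgroup N Bl) p.2 ∧
           p.1 ∈ S1 N ∧
           IsMinDouble N (S1 N ⊓ youngSubgroup N Bm)
             (S1 N ⊓ conjSub N p.2 (youngSubgroup N Bl)) p.1 ∧
           (S1 N ⊓ youngSubgroup N Bm) ⊓
             conjSub N p.1 (S1 N ⊓ conjSub N p.2 (youngSubgroup N Bl)) = ⊥}
      {π | IsMinDouble N (S1 N ⊓ youngSubgroup N Bm) (youngSubgroup N Bl) π ∧
           (S1 N ⊓ youngSubgroup N Bm) ⊓ conjSub N π (youngSubgroup N Bl) = ⊥} := by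
  classical
  have hHK : S1 N ⊓ youngSubgroup N Bm = youngSubgroup N (Mk.C0 ∩ Bm) :=
    Mk.young_inf _ _
  refine ⟨?_, ?_, ?_⟩
  · -- MapsTo
    rintro ⟨σ, α⟩ ⟨hα, hσS1, hσmin, htriv⟩
    obtain ⟨hαB, hαC⟩ := (Mk.isMinDouble_iff (C := Mk.C0)).mp hα
    have hqdef : α = Mk.al (α⁻¹ 0) := Mk.eq_al hαC
    have hq : Mk.BlockMin Bl (α⁻¹ 0) := Mk.blockMin_of_incOn hαB
    have hσ0 : σ 0 = 0 := Mk.mem_S1_iff.mp hσS1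
    have hnu : S1 N ⊓ conjSub N α (youngSubgroup N Bl)
        = youngSubgroup N (Mk.nuS (α⁻¹ 0) Bl) := by
      conv_lhs => rw [hqdef]
      exact Mk.young_nu hq
    rw [hHK, hnu] at hσmin
    obtain ⟨hσν, hσBm⟩ := Mk.isMinDouble_iff.mp hσmin
    simp only [Set.mem_setOf_eq]
    constructor
    · rw [hHK]
      apply Mk.isMinDouble_iff.mpr
      constructor
      · rw [hqdef]
        exact Mk.main1 hq hσ0 hσν
      · rw [hqdef]
        exact Mk.main2 Set.inter_subset_left hσ0 hσBm
    · rw [← Mk.conj_identity hσS1 (youngSubgroup N Bl)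
        (S1 N ⊓ youngSubgroup N Bm) inf_le_left]
      exact htriv
  · -- InjOn
    rintro ⟨σ, α⟩ ⟨hα, hσS1, -, -⟩ ⟨σ', α'⟩ ⟨hα', hσ'S1, -, -⟩ heq
    simp only at heq
    dsimp only at hα hσS1 hα' hσ'S1
    have hαC := ((Mk.isMinDouble_iff (C := Mk.C0)).mp hα).2
    have hα'C := ((Mk.isMinDouble_iff (C := Mk.C0)).mp hα').2
    have hσ0 : σ 0 = 0 := Mk.mem_S1_iff.mp hσS1
    have hσ'0 : σ' 0 = 0 := Mk.mem_S1_iff.mp hσ'S1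
    have happ : σ (α (α'⁻¹ 0)) = σ' (α' (α'⁻¹ 0)) := by
      have := congrArg (fun g : Equiv.Perm (Fin (N + 1)) => g (α'⁻¹ 0)) heq
      simpa only [Equiv.Perm.mul_apply] using this
    rw [Equiv.Perm.apply_inv_self, hσ'0] at happ
    have h0 : α (α'⁻¹ 0) = 0 := σ.injective (happ.trans hσ0.symm)
    have h00 : α⁻¹ 0 = α'⁻¹ 0 := by
      conv_lhs => rw [← h0]
      rw [Equiv.Perm.inv_apply_self]
    have hαα' : α = α' := by
      rw [Mk.eq_al hαC, Mk.eq_al hα'C, h00]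
    have hσσ' : σ = σ' := by
      rw [hαα'] at heq
      exact mul_right_cancel heq
    exact Prod.ext hσσ' hαα'
  · -- SurjOn
    intro π hπ
    obtain ⟨hπmin, htriv⟩ := hπ
    rw [hHK] at hπmin
    obtain ⟨hπB, hπBm⟩ := Mk.isMinDouble_iff.mp hπmin
    have hq : Mk.BlockMin Bl (π⁻¹ 0) := Mk.blockMin_of_incOn hπB
    set q := π⁻¹ 0 with hqdef
    set α := Mk.al q with hαdef
    set σ := π * α⁻¹ with hσdef
    have hσα : σ * α = π := by rw [hσdef]; group
    have hσ0 : σ 0 = 0 := by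
      rw [hσdef]
      simp only [Equiv.Perm.mul_apply]
      rw [hαdef, Mk.al_inv_zero, hqdef, Equiv.Perm.apply_inv_self]
    have hσS1 : σ ∈ S1 N := Mk.mem_S1_iff.mpr hσ0
    refine ⟨(σ, α), ⟨?_, hσS1, ?_, ?_⟩, hσα⟩
    · exact Mk.isMinDouble_iff.mpr ⟨Mk.al_incOn hq, Mk.incOn_al_inv q⟩
    · rw [hHK]
      have hnu : S1 N ⊓ conjSub N α (youngSubgroup N Bl)
          = youngSubgroup N (Mk.nuS q Bl) := Mk.young_nu hq
      rw [hnu]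
      exact Mk.isMinDouble_iff.mpr
        ⟨Mk.main3 hq hπB, Mk.main4 Set.inter_subset_left hqdef.symm hπBm⟩
    · rw [Mk.conj_identity hσS1 _ _ inf_le_left, hσα]
      exact htriv

end
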